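/- Fix a natural number m and let V_m : {(X, Y, Z) ∈ ℝ³ : X + Y > 0} → ℝ be defined by V_m(X, Y, Z) = ∂^m_λ (λ²(X − Y) + 2λZ + (X + Y))^{−1/2}|_{λ=0} (the m-th derivative at λ = 0 of the function λ ↦ (λ²(X−Y) + 2λZ + (X+Y))^{−1/2}, which is well defined for λ near 0 when X + Y > 0). Then V_m satisfies the wave equation ∂²V_m/∂X² − ∂²V_m/∂Y² − ∂²V_m/∂Z² = 0 at every point with X + Y > 0. -/

import Mathlib

open Real Filter Finset Topology



noncomputable def wA : ℕ → ℤ → ℝ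
  | 0, i => if i = 0 then 1 else 0
  | (m+1), i => ((i : ℝ) - m - 1/2) * wA m i + ((m : ℝ) - 2*i + 2) * wA m (i-1)

lemma wA_neg (m : ℕ) : ∀ i : ℤ, i < 0 → wA m i = 0 := by
  induction m with
  | zero => intro i hi; simp [wA, hi.ne]
  | succ m ih =>
    intro i hi
    simp only [wA, ih i hi, ih (i-1) (by omega), mul_zero, add_zero]

lemma wA_big (m : ℕ) : ∀ i : ℤ, (m : ℤ) < 2*i → wA m i = 0 := by
  induction m with
  | zero => intro i hi; simp [wA]; omega
  | succ m ih =>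
    intro i hi
    have h1 : wA m i = 0 := ih i (by omega)
    by_cases h2 : (m : ℤ) < 2*(i-1)
    · simp [wA, h1, ih _ h2]
    · have : 2*i = (m : ℤ) + 2 := by omega
      have hc : ((m : ℝ) - 2*i + 2) = 0 := by
        have := congrArg (fun n : ℤ => (n : ℝ)) this
        push_cast at this
        linarith
      simp [wA, h1, hc]

lemma wA_key (m : ℕ) : ∀ j : ℤ,
    2 * wA m j * j * ((j : ℝ) - m - 1/2)
      = wA m (j-1) * ((m : ℝ) - 2*j + 2) * ((m : ℝ) - 2*j + 1) := by
  induction m with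
  | zero =>
    intro j
    rcases eq_or_ne j 0 with rfl | h0
    · simp [wA]
    rcases eq_or_ne j 1 with rfl | h1
    · norm_num [wA]
    · have : j - 1 ≠ 0 := by omega
      simp [wA, h0, this]
  | succ m ih =>
    intro j
    have k1 := ih j
    have k2 := ih (j-1)
    simp only [wA]
    push_cast at k1 k2 ⊢
    linear_combination ((j:ℝ) - m - 3/2) * k1 + ((m:ℝ) - 2*j + 2) * k2



/-- derivative of `L^i * M^r`. -/
lemma hd_pr {L M : ℝ → ℝ} {α α' t : ℝ} (i : ℕ) (r : ℝ)
    (hL : HasDerivAt L α t) (hM : HasDerivAt M α' t) (hM0 : M t ≠ 0) :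
    HasDerivAt (fun x => L x ^ i * M x ^ r)
      ((i:ℝ)*α*(L t)^(i-1)*(M t)^r + r*α'*(L t)^i*(M t)^(r-1)) t := by
  have h1 : HasDerivAt (fun x => L x ^ i) (↑i * L t ^ (i-1) * α) t := hL.pow i
  have h2 : HasDerivAt (fun x => M x ^ r) (r * M t ^ (r-1) * α') t := by
    exact (Real.hasDerivAt_rpow_const (p := r) (Or.inl hM0)).comp t hM
  refine (h1.fun_mul h2).congr_deriv ?_
  ring

noncomputable def trm (a b c : ℝ) (m i : ℕ) (l : ℝ) : ℝ :=
  wA m i * (2*a)^i *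
    ((2*a*l + b)^((m:ℤ) - 2*i) * (a*l^2 + b*l + c) ^ ((i:ℝ) - m - 1/2))

noncomputable def Ptm (a b c : ℝ) (m i : ℕ) (l : ℝ) : ℝ :=
  wA m i * (2*a)^(i+1) *
    (((m:ℝ) - 2*i) * ((2*a*l + b)^((m:ℤ) - 2*i - 1) * (a*l^2+b*l+c) ^ ((i:ℝ) - m - 1/2)))

noncomputable def Stm (a b c : ℝ) (m i : ℕ) (l : ℝ) : ℝ :=
  wA m i * (2*a)^i *
    (((i:ℝ) - m - 1/2) * ((2*a*l + b)^((m:ℤ) - 2*i + 1) * (a*l^2+b*l+c) ^ ((i:ℝ) - m - 3/2)))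

lemma hasDerivAt_q (a b c l : ℝ) :
    HasDerivAt (fun t : ℝ => a*t^2 + b*t + c) (2*a*l + b) l := by
  have h1 : HasDerivAt (fun t : ℝ => a*t^2) (a * (2*l)) l := by
    simpa using ((hasDerivAt_pow 2 l).const_mul a)
  have h2 : HasDerivAt (fun t : ℝ => b*t) b l := by
    simpa using (hasDerivAt_id l).const_mul b
  have := (h1.fun_add h2).add_const c
  refine this.congr_deriv ?_
  ring

lemma hasDerivAt_lin (a b l : ℝ) :
    HasDerivAt (fun t : ℝ => 2*a*t + b) (2*a) l := by
  simpa using ((hasDerivAt_id l).const_mul (2*a)).add_const b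

lemma trm_hasDeriv (a b c : ℝ) (m i : ℕ) {l : ℝ} (hl : 0 < a*l^2 + b*l + c) :
    HasDerivAt (trm a b c m i) (Ptm a b c m i l + Stm a b c m i l) l := by
  by_cases hmi : 2*i ≤ m
  · -- natural exponent case
    set k := m - 2*i with hk
    have hcast : (m:ℤ) - 2*i = (k:ℤ) := by omega
    have htrm : trm a b c m i = fun l =>
        wA m i * (2*a)^i * ((2*a*l + b)^k * (a*l^2+b*l+c) ^ ((i:ℝ) - m - 1/2)) := by
      funext t; simp [trm, hcast, zpow_natCast]
    rw [htrm]
    have hD := hd_pr (L := fun t => 2*a*t + b) (M := fun t => a*t^2+b*t+c)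
      k ((i:ℝ) - m - 1/2) (hasDerivAt_lin a b l) (hasDerivAt_q a b c l) hl.ne'
    have := hD.const_mul (wA m i * (2*a)^i)
    refine this.congr_deriv ?_
    simp only [Ptm, Stm]
    rw [show ((i:ℝ) - m - 3/2) = ((i:ℝ) - m - 1/2) - 1 from by ring]
    rw [show (m:ℤ) - 2*i + 1 = ((k+1 : ℕ) : ℤ) from by omega, zpow_natCast, pow_succ]
    rcases Nat.eq_zero_or_pos k with hk0 | hk1
    · have hm2 : (m:ℝ) - 2*i = 0 := by
        have h' : m = 2*i := by omega
        rw [h']; push_cast; ring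
      rw [hm2, hk0]
      ring
    · rw [show (m:ℤ) - 2*i - 1 = ((k-1 : ℕ) : ℤ) from by omega, zpow_natCast]
      have hkc : ((k:ℝ)) = (m:ℝ) - 2*i := by
        rw [hk]; push_cast [Nat.cast_sub hmi]; ring
      rw [← hkc]
      ring
  · have hw : wA m i = 0 := wA_big m i (by omega)
    have h0 : trm a b c m i = fun _ => 0 := by funext t; simp [trm, hw]
    rw [h0, Ptm, Stm, hw]
    simpa using hasDerivAt_const l (0:ℝ)

noncomputable def Qtm (a b c : ℝ) (m i : ℕ) (l : ℝ) : ℝ :=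
  ((m:ℝ) - 2*i + 2) * wA m ((i:ℤ)-1) *
    ((2*a)^i * ((2*a*l + b) ^ ((m:ℤ) - 2*i + 1) * (a*l^2+b*l+c) ^ ((i:ℝ) - m - 3/2)))

lemma trm_succ (a b c : ℝ) (m i : ℕ) (l : ℝ) :
    trm a b c (m+1) i l = Stm a b c m i l + Qtm a b c m i l := by
  simp only [trm, Stm, Qtm, wA]
  rw [show ((m+1:ℕ):ℤ) - 2*(i:ℕ) = (m:ℤ) - 2*(i:ℕ) + 1 from by push_cast; ring]
  rw [show (i:ℝ) - ((m+1:ℕ):ℝ) - 1/2 = (i:ℝ) - (m:ℝ) - 3/2 from by push_cast; ring]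
  push_cast
  ring

lemma sum_shift (a b c : ℝ) (m : ℕ) (l : ℝ) :
    ∑ i ∈ range (m+2), trm a b c (m+1) i l
      = ∑ i ∈ range (m+1), (Ptm a b c m i l + Stm a b c m i l) := by
  rw [Finset.sum_congr rfl (fun i _ => trm_succ a b c m i l), Finset.sum_add_distrib,
    Finset.sum_add_distrib]
  have hS : ∑ i ∈ range (m+2), Stm a b c m i l = ∑ i ∈ range (m+1), Stm a b c m i l := by
    rw [show m+2 = (m+1)+1 from rfl, Finset.sum_range_succ]
    have hz : wA m ((m+1 : ℕ):ℤ) = 0 := wA_big m _ (by omega)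
    simp only [Stm, hz, zero_mul, add_zero]
  have hQ : ∑ i ∈ range (m+2), Qtm a b c m i l = ∑ i ∈ range (m+1), Ptm a b c m i l := by
    rw [show m+2 = (m+1)+1 from rfl, Finset.sum_range_succ']
    have hz : wA m (((0:ℕ):ℤ) - 1) = 0 := wA_neg m _ (by omega)
    have h0 : Qtm a b c m 0 l = 0 := by
      simp only [Qtm, hz, mul_zero, zero_mul]
    rw [h0, add_zero]
    apply Finset.sum_congr rfl
    intro i _
    simp only [Qtm, Ptm]
    rw [show ((i+1:ℕ):ℤ) - 1 = (i:ℤ) from by push_cast; ring]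
    rw [show (m:ℤ) - 2*((i+1:ℕ):ℤ) + 1 = (m:ℤ) - 2*((i:ℕ):ℤ) - 1 from by push_cast; ring]
    rw [show ((i+1:ℕ):ℝ) - (m:ℝ) - 3/2 = (i:ℝ) - (m:ℝ) - 1/2 from by push_cast; ring]
    push_cast
    ring
  rw [hS, hQ, add_comm]

lemma main1D (a b c : ℝ) (m : ℕ) : ∀ l : ℝ, 0 < a*l^2+b*l+c →
    iteratedDeriv m (fun t => (a*t^2+b*t+c) ^ (-(1:ℝ)/2)) l
      = ∑ i ∈ range (m+1), trm a b c m i l := by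
  induction m with
  | zero =>
    intro l hl
    rw [iteratedDeriv_zero]
    simp [trm, wA]
    norm_num
  | succ m ih =>
    intro l hl
    rw [iteratedDeriv_succ]
    have hopen : IsOpen {t : ℝ | 0 < a*t^2+b*t+c} :=
      isOpen_lt continuous_const (by continuity)
    have hmem : {t : ℝ | 0 < a*t^2+b*t+c} ∈ 𝓝 l := hopen.mem_nhds hl
    have heq : iteratedDeriv m (fun t => (a*t^2+b*t+c) ^ (-(1:ℝ)/2))
        =ᶠ[𝓝 l] fun t => ∑ i ∈ range (m+1), trm a b c m i t :=
      eventually_of_mem hmem (fun t ht => ih t ht)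
    rw [heq.deriv_eq]
    have hsum : HasDerivAt (fun t => ∑ i ∈ range (m+1), trm a b c m i t)
        (∑ i ∈ range (m+1), (Ptm a b c m i l + Stm a b c m i l)) l :=
      HasDerivAt.fun_sum (fun i _ => trm_hasDeriv a b c m i hl)
    rw [hsum.deriv, ← sum_shift]



/-- Second derivative of a finite sum of `c i * L^i * M^(r i)` with affine `L, M`. -/
lemma d2_slice {L M : ℝ → ℝ} {α α' : ℝ} (hL : ∀ t, HasDerivAt L α t)
    (hM : ∀ t, HasDerivAt M α' t) {s : Set ℝ} (hs : IsOpen s)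
    (hMs : ∀ t ∈ s, 0 < M t) (n : ℕ) (c : ℕ → ℝ) (r : ℕ → ℝ) (G : ℝ → ℝ)
    (hG : ∀ t ∈ s, G t = ∑ i ∈ range n, c i * (L t ^ i * M t ^ r i))
    {t0 : ℝ} (ht0 : t0 ∈ s) :
    iteratedDeriv 2 G t0 = ∑ i ∈ range n,
      c i * ((i:ℝ)*((i-1:ℕ):ℝ)*α^2 * (L t0 ^ (i-1-1) * M t0 ^ r i)
        + 2*(i:ℝ)*(r i)*α*α' * (L t0 ^ (i-1) * M t0 ^ (r i - 1))
        + (r i)*((r i)-1)*α'^2 * (L t0 ^ i * M t0 ^ (r i - 2))) := by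
  have hD1 : ∀ t ∈ s, HasDerivAt (fun x => ∑ i ∈ range n, c i * (L x ^ i * M x ^ r i))
      (∑ i ∈ range n, c i * ((i:ℝ)*α*(L t ^ (i-1) * M t ^ r i)
        + (r i)*α'*(L t ^ i * M t ^ (r i - 1)))) t := by
    intro t ht
    refine HasDerivAt.fun_sum fun i _ => ?_
    have := (hd_pr i (r i) (hL t) (hM t) (hMs t ht).ne').const_mul (c i)
    refine this.congr_deriv ?_
    ring
  have hD2 : HasDerivAt (fun x => ∑ i ∈ range n, c i * ((i:ℝ)*α*(L x ^ (i-1) * M x ^ r i)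
        + (r i)*α'*(L x ^ i * M x ^ (r i - 1))))
      (∑ i ∈ range n,
        c i * ((i:ℝ)*((i-1:ℕ):ℝ)*α^2 * (L t0 ^ (i-1-1) * M t0 ^ r i)
          + 2*(i:ℝ)*(r i)*α*α' * (L t0 ^ (i-1) * M t0 ^ (r i - 1))
          + (r i)*((r i)-1)*α'^2 * (L t0 ^ i * M t0 ^ (r i - 2)))) t0 := by
    refine HasDerivAt.fun_sum fun i _ => ?_
    have h1 := (hd_pr (i-1) (r i) (hL t0) (hM t0) (hMs t0 ht0).ne').const_mul (c i * i * α)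
    have h2 := (hd_pr i (r i - 1) (hL t0) (hM t0) (hMs t0 ht0).ne').const_mul (c i * (r i) * α')
    have h3 := h1.fun_add h2
    have heq : (fun x => c i * i * α * (L x ^ (i-1) * M x ^ r i)
          + c i * (r i) * α' * (L x ^ i * M x ^ (r i - 1)))
        = fun x => c i * ((i:ℝ)*α*(L x ^ (i-1) * M x ^ r i)
          + (r i)*α'*(L x ^ i * M x ^ (r i - 1))) := by
      funext x; ring
    rw [heq] at h3
    convert h3 using 1
    rw [show r i - 1 - 1 = r i - 2 from by ring]
    ring
  have hmem := hs.mem_nhds ht0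
  have e1 : G =ᶠ[𝓝 t0] fun t => ∑ i ∈ range n, c i * (L t ^ i * M t ^ r i) :=
    eventually_of_mem hmem hG
  have e3 : deriv (fun t => ∑ i ∈ range n, c i * (L t ^ i * M t ^ r i))
      =ᶠ[𝓝 t0] fun t => ∑ i ∈ range n, c i * ((i:ℝ)*α*(L t ^ (i-1) * M t ^ r i)
        + (r i)*α'*(L t ^ i * M t ^ (r i - 1))) :=
    eventually_of_mem hmem (fun t ht => (hD1 t ht).deriv)
  rw [show iteratedDeriv 2 G = deriv (deriv G) from by rw [iteratedDeriv_succ, iteratedDeriv_one]]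
  rw [(e1.deriv.trans e3).deriv_eq, hD2.deriv]

lemma zterm_d1 (m i : ℕ) (c : ℝ) (hc0 : (m:ℤ) < 2*i → c = 0) (z : ℝ) :
    HasDerivAt (fun z : ℝ => c * (2*z)^((m:ℤ)-2*i))
      (c * (((m:ℝ)-2*i) * 2 * (2*z)^((m:ℤ)-2*i-1))) z := by
  have h2z : HasDerivAt (fun z : ℝ => 2*z) 2 z := by
    simpa using (hasDerivAt_id z).const_mul (2:ℝ)
  by_cases hmi : 2*i ≤ m
  · set k := m - 2*i with hk
    have hcast : (m:ℤ) - 2*i = (k:ℤ) := by omega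
    have hfun : (fun z : ℝ => c * (2*z)^((m:ℤ)-2*i)) = fun z => c * (2*z)^k := by
      funext z; rw [hcast, zpow_natCast]
    rw [hfun]
    have h := (h2z.fun_pow k).const_mul c
    refine h.congr_deriv ?_
    rcases Nat.eq_zero_or_pos k with hk0 | hk1
    · have hm2 : (m:ℝ) - 2*i = 0 := by
        have h' : m = 2*i := by omega
        rw [h']; push_cast; ring
      rw [hm2, hk0]; ring
    · rw [show (m:ℤ) - 2*i - 1 = ((k-1 : ℕ) : ℤ) from by omega, zpow_natCast]
      have hkc : ((k:ℝ)) = (m:ℝ) - 2*i := by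
        rw [hk]; push_cast [Nat.cast_sub hmi]; ring
      rw [← hkc]; ring
  · have hc : c = 0 := hc0 (by omega)
    rw [hc]
    simp only [zero_mul]
    exact hasDerivAt_const z 0

lemma zterm_d2 (m i : ℕ) (c : ℝ) (hc0 : (m:ℤ) < 2*i → c = 0) (z : ℝ) :
    HasDerivAt (fun z : ℝ => c * (((m:ℝ)-2*i) * 2 * (2*z)^((m:ℤ)-2*i-1)))
      (c * (4*((m:ℝ)-2*i)*((m:ℝ)-2*i-1) * (2*z)^((m:ℤ)-2*i-2))) z := by
  have h2z : HasDerivAt (fun z : ℝ => 2*z) 2 z := by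
    simpa using (hasDerivAt_id z).const_mul (2:ℝ)
  by_cases hmi : 2*i ≤ m
  · set k := m - 2*i with hk
    have hkc : ((k:ℝ)) = (m:ℝ) - 2*i := by
      rw [hk]; push_cast [Nat.cast_sub hmi]; ring
    rcases Nat.eq_zero_or_pos k with hk0 | hk1
    · have hm2 : (m:ℝ) - 2*i = 0 := by rw [← hkc, hk0]; norm_num
      have hfun : (fun z : ℝ => c * (((m:ℝ)-2*i) * 2 * (2*z)^((m:ℤ)-2*i-1)))
          = fun _ => 0 := by
        funext z; rw [hm2]; ring
      rw [hfun, hm2]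
      simpa using hasDerivAt_const z (0:ℝ)
    · have hcast : (m:ℤ) - 2*i - 1 = ((k-1 : ℕ):ℤ) := by omega
      have hfun : (fun z : ℝ => c * (((m:ℝ)-2*i) * 2 * (2*z)^((m:ℤ)-2*i-1)))
          = fun z => (c * (((m:ℝ)-2*i) * 2)) * (2*z)^(k-1) := by
        funext z; rw [hcast, zpow_natCast]; ring
      rw [hfun]
      have h := (h2z.fun_pow (k-1)).const_mul (c * (((m:ℝ)-2*i) * 2))
      refine h.congr_deriv ?_
      rcases Nat.lt_or_ge k 2 with hk2 | hk2
      · have hk1' : k = 1 := by omega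
        have : (m:ℝ) - 2*i - 1 = 0 := by rw [← hkc, hk1']; norm_num
        rw [this, hk1']
        norm_num
      · rw [show (m:ℤ) - 2*i - 2 = ((k-2 : ℕ) : ℤ) from by omega, zpow_natCast]
        have e1 : ((k-1:ℕ):ℝ) = (m:ℝ) - 2*i - 1 := by
          push_cast [Nat.cast_sub (by omega : 1 ≤ k)]; rw [hkc]
        have e2 : k - 1 - 1 = k - 2 := by omega
        rw [e1, e2]; ring
  · have hc : c = 0 := hc0 (by omega)
    rw [hc]
    simp only [zero_mul]
    exact hasDerivAt_const z 0

lemma d2_sliceZ (m n : ℕ) (c : ℕ → ℝ) (hc : ∀ i : ℕ, (m:ℤ) < 2*(i:ℤ) → c i = 0) (G : ℝ → ℝ)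
    (hG : ∀ z : ℝ, G z = ∑ i ∈ range n, c i * (2*z)^((m:ℤ)-2*i)) (z0 : ℝ) :
    iteratedDeriv 2 G z0 = ∑ i ∈ range n,
      c i * (4*((m:ℝ)-2*i)*((m:ℝ)-2*i-1) * (2*z0)^((m:ℤ)-2*i-2)) := by
  have hGfun : G = fun z => ∑ i ∈ range n, c i * (2*z)^((m:ℤ)-2*i) := funext hG
  have hD1 : ∀ z : ℝ, HasDerivAt (fun z : ℝ => ∑ i ∈ range n, c i * (2*z)^((m:ℤ)-2*i))
      (∑ i ∈ range n, c i * (((m:ℝ)-2*i) * 2 * (2*z)^((m:ℤ)-2*i-1))) z :=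
    fun z => HasDerivAt.fun_sum fun i _ => zterm_d1 m i (c i) (hc i) z
  have hD2 : HasDerivAt (fun z : ℝ => ∑ i ∈ range n, c i * (((m:ℝ)-2*i) * 2 * (2*z)^((m:ℤ)-2*i-1)))
      (∑ i ∈ range n, c i * (4*((m:ℝ)-2*i)*((m:ℝ)-2*i-1) * (2*z0)^((m:ℤ)-2*i-2))) z0 :=
    HasDerivAt.fun_sum fun i _ => zterm_d2 m i (c i) (hc i) z0
  rw [show iteratedDeriv 2 G = deriv (deriv G) from by rw [iteratedDeriv_succ, iteratedDeriv_one], hGfun]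
  have : deriv (fun z : ℝ => ∑ i ∈ range n, c i * (2*z)^((m:ℤ)-2*i))
      = fun z => ∑ i ∈ range n, c i * (((m:ℝ)-2*i) * 2 * (2*z)^((m:ℤ)-2*i-1)) :=
    funext fun z => (hD1 z).deriv
  rw [this, hD2.deriv]



/-- For each natural number `m`, the function
`V_m(X,Y,Z) = ∂^m_λ (λ²(X−Y) + 2λZ + (X+Y))^{−1/2}|_{λ=0}` satisfies the wave
equation `∂²V_m/∂X² − ∂²V_m/∂Y² − ∂²V_m/∂Z² = 0` at every point with `X + Y > 0`. -/
theorem stmt_10 (m : ℕ) (X Y Z : ℝ) (h : 0 < X + Y) :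
    iteratedDeriv 2 (fun x : ℝ =>
        iteratedDeriv m
          (fun l : ℝ => (l ^ 2 * (x - Y) + 2 * l * Z + (x + Y)) ^ (-(1 : ℝ) / 2)) 0) X
    - iteratedDeriv 2 (fun y : ℝ =>
        iteratedDeriv m
          (fun l : ℝ => (l ^ 2 * (X - y) + 2 * l * Z + (X + y)) ^ (-(1 : ℝ) / 2)) 0) Y
    - iteratedDeriv 2 (fun z : ℝ =>
        iteratedDeriv m
          (fun l : ℝ => (l ^ 2 * (X - Y) + 2 * l * z + (X + Y)) ^ (-(1 : ℝ) / 2)) 0) Z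
    = 0 := by
  -- coefficients
  set r : ℕ → ℝ := fun i => (i:ℝ) - m - 1/2 with hr
  set cXY : ℕ → ℝ := fun i => wA m i * (2*Z)^((m:ℤ) - 2*i) with hcXY
  set cZ : ℕ → ℝ := fun i => wA m i * (2*(X-Y))^i * (X+Y) ^ ((i:ℝ) - m - 1/2) with hcZ
  -- X slice
  have hXX : iteratedDeriv 2 (fun x : ℝ =>
        iteratedDeriv m
          (fun l : ℝ => (l ^ 2 * (x - Y) + 2 * l * Z + (x + Y)) ^ (-(1 : ℝ) / 2)) 0) X
      = ∑ i ∈ range (m+1),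
        cXY i * ((i:ℝ)*((i-1:ℕ):ℝ)*(2:ℝ)^2 * ((2*X-2*Y) ^ (i-1-1) * (X+Y) ^ r i)
          + 2*(i:ℝ)*(r i)*2*1 * ((2*X-2*Y) ^ (i-1) * (X+Y) ^ (r i - 1))
          + (r i)*((r i)-1)*(1:ℝ)^2 * ((2*X-2*Y) ^ i * (X+Y) ^ (r i - 2))) := by
    refine d2_slice (L := fun x => 2*x-2*Y) (M := fun x => x + Y) (α := 2) (α' := 1)
      (fun t => by simpa using ((hasDerivAt_id t).const_mul 2).sub_const (2*Y))
      (fun t => by simpa using (hasDerivAt_id t).add_const Y)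
      (s := {x : ℝ | 0 < x + Y}) (isOpen_lt continuous_const (by continuity))
      (fun t ht => ht) (m+1) cXY r _ ?_ h
    intro x hx
    have hx' : (0:ℝ) < x + Y := hx
    have hbase : (fun l : ℝ => (l ^ 2 * (x - Y) + 2 * l * Z + (x + Y)) ^ (-(1 : ℝ) / 2))
        = fun t : ℝ => ((x-Y)*t^2 + (2*Z)*t + (x+Y)) ^ (-(1:ℝ)/2) := by
      funext t; congr 1; ring
    rw [hbase, main1D (x-Y) (2*Z) (x+Y) m 0 (by norm_num; exact hx')]
    refine Finset.sum_congr rfl fun i _ => ?_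
    simp only [trm, hcXY, hr]
    norm_num
    rw [show 2*(x-Y) = 2*x-2*Y from by ring]
    ring
  -- Y slice
  have hYY : iteratedDeriv 2 (fun y : ℝ =>
        iteratedDeriv m
          (fun l : ℝ => (l ^ 2 * (X - y) + 2 * l * Z + (X + y)) ^ (-(1 : ℝ) / 2)) 0) Y
      = ∑ i ∈ range (m+1),
        cXY i * ((i:ℝ)*((i-1:ℕ):ℝ)*(-2:ℝ)^2 * ((2*X-2*Y) ^ (i-1-1) * (X+Y) ^ r i)
          + 2*(i:ℝ)*(r i)*(-2)*1 * ((2*X-2*Y) ^ (i-1) * (X+Y) ^ (r i - 1))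
          + (r i)*((r i)-1)*(1:ℝ)^2 * ((2*X-2*Y) ^ i * (X+Y) ^ (r i - 2))) := by
    refine d2_slice (L := fun y => 2*X-2*y) (M := fun y => X + y) (α := -2) (α' := 1)
      (fun t => by simpa using (((hasDerivAt_id t).const_mul 2).const_sub (2*X)))
      (fun t => by simpa using ((hasDerivAt_id t).const_add X))
      (s := {y : ℝ | 0 < X + y}) (isOpen_lt continuous_const (by continuity))
      (fun t ht => ht) (m+1) cXY r _ ?_ h
    intro y hy
    have hy' : (0:ℝ) < X + y := hy
    have hbase : (fun l : ℝ => (l ^ 2 * (X - y) + 2 * l * Z + (X + y)) ^ (-(1 : ℝ) / 2))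
        = fun t : ℝ => ((X-y)*t^2 + (2*Z)*t + (X+y)) ^ (-(1:ℝ)/2) := by
      funext t; congr 1; ring
    rw [hbase, main1D (X-y) (2*Z) (X+y) m 0 (by norm_num; exact hy')]
    refine Finset.sum_congr rfl fun i _ => ?_
    simp only [trm, hcXY, hr]
    norm_num
    rw [show 2*(X-y) = 2*X-2*y from by ring]
    ring
  -- Z slice
  have hZZ : iteratedDeriv 2 (fun z : ℝ =>
        iteratedDeriv m
          (fun l : ℝ => (l ^ 2 * (X - Y) + 2 * l * z + (X + Y)) ^ (-(1 : ℝ) / 2)) 0) Z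
      = ∑ i ∈ range (m+1),
        cZ i * (4*((m:ℝ)-2*i)*((m:ℝ)-2*i-1) * (2*Z)^((m:ℤ)-2*i-2)) := by
    refine d2_sliceZ m (m+1) cZ (fun i hi => by simp [hcZ, wA_big m i hi]) _ ?_ Z
    intro z
    have hbase : (fun l : ℝ => (l ^ 2 * (X - Y) + 2 * l * z + (X + Y)) ^ (-(1 : ℝ) / 2))
        = fun t : ℝ => ((X-Y)*t^2 + (2*z)*t + (X+Y)) ^ (-(1:ℝ)/2) := by
      funext t; congr 1; ring
    rw [hbase, main1D (X-Y) (2*z) (X+Y) m 0 (by norm_num; exact h)]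
    refine Finset.sum_congr rfl fun i _ => ?_
    simp only [trm, hcZ]
    norm_num
    ring
  rw [hXX, hYY, hZZ, ← Finset.sum_sub_distrib, ← Finset.sum_sub_distrib]
  -- telescoping
  set E : ℕ → ℝ := fun i => 8*(i:ℝ)*(r i)*wA m i*(2*Z)^((m:ℤ)-2*i)
      *((2*X-2*Y)^(i-1)*(X+Y)^(r i - 1)) with hE
  have hstep : ∀ i ∈ range (m+1),
      cXY i * ((i:ℝ)*((i-1:ℕ):ℝ)*(2:ℝ)^2 * ((2*X-2*Y) ^ (i-1-1) * (X+Y) ^ r i)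
          + 2*(i:ℝ)*(r i)*2*1 * ((2*X-2*Y) ^ (i-1) * (X+Y) ^ (r i - 1))
          + (r i)*((r i)-1)*(1:ℝ)^2 * ((2*X-2*Y) ^ i * (X+Y) ^ (r i - 2)))
        - cXY i * ((i:ℝ)*((i-1:ℕ):ℝ)*(-2:ℝ)^2 * ((2*X-2*Y) ^ (i-1-1) * (X+Y) ^ r i)
          + 2*(i:ℝ)*(r i)*(-2)*1 * ((2*X-2*Y) ^ (i-1) * (X+Y) ^ (r i - 1))
          + (r i)*((r i)-1)*(1:ℝ)^2 * ((2*X-2*Y) ^ i * (X+Y) ^ (r i - 2)))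
        - cZ i * (4*((m:ℝ)-2*i)*((m:ℝ)-2*i-1) * (2*Z)^((m:ℤ)-2*i-2))
      = E i - E (i+1) := by
    intro i _
    have hkey := wA_key m ((i:ℤ)+1)
    rw [show (i:ℤ)+1-1 = (i:ℤ) from by ring] at hkey
    push_cast at hkey
    have e1 : E (i+1) = 8*((i:ℝ)+1)*((i:ℝ)+1-m-1/2)*wA m ((i:ℤ)+1)*(2*Z)^((m:ℤ)-2*i-2)
        *((2*X-2*Y)^i*(X+Y)^((i:ℝ)-m-1/2)) := by
      simp only [hE, hr]
      rw [show ((i+1:ℕ):ℤ) = (i:ℤ)+1 from by push_cast; ring]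
      rw [show (m:ℤ)-2*((i:ℤ)+1) = (m:ℤ)-2*(i:ℤ)-2 from by ring]
      rw [show (i+1:ℕ)-1 = i from by omega]
      rw [show ((i+1:ℕ):ℝ)-m-1/2-1 = (i:ℝ)-m-1/2 from by push_cast; ring]
      push_cast
      ring
    rw [e1]
    simp only [hE, hr, hcXY, hcZ]
    rw [show (2*(X-Y)) = 2*X-2*Y from by ring]
    linear_combination (4*(2*Z)^((m:ℤ)-2*(i:ℤ)-2)*((2*X-2*Y)^i)*((X+Y)^((i:ℝ)-m-1/2))) * hkey
  rw [Finset.sum_congr rfl hstep, Finset.sum_range_sub']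
  have hE0 : E 0 = 0 := by simp [hE]
  have hEm : E (m+1) = 0 := by
    have : wA m ((m:ℤ)+1) = 0 := wA_big m _ (by omega)
    simp [hE, this]
  rw [hE0, hEm, sub_zero]
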